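/- For j ≥ 3, the parametric index Φ^a with a = (j−2,...,j−2) differs from Φ: for the point-veto game u^b with b = (1, j−1, 0, ..., 0) one has Φ^a(u^b) = (0, 1, 0, ..., 0) while Φ(u^b) = (1/j, (j−1)/j, 0, ..., 0). -/

import Mathlib

open Finset BigOperators

attribute [local instance] Classical.propDecidable

noncomputable section

variable {n j k : ℕ}

/-- The top element `j-1` of `Fin j`. -/
def topF (j : ℕ) [NeZero j] : Fin j :=
  ⟨j - 1, Nat.sub_lt (Nat.pos_of_ne_zero (NeZero.ne j)) one_pos⟩

/-- The profile equal to the constant `c` on `S` and to `x` off `S`. -/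
def mer (S : Finset (Fin n)) (c : Fin j) (x : Fin n → Fin j) : Fin n → Fin j :=
  fun i => if i ∈ S then c else x i

/-- `(j,k)` simple game: `v 0 = 0`, `v (j-1,…,j-1) = k-1`, monotone. -/
def IsJKGame [NeZero j] [NeZero k] (v : (Fin n → Fin j) → Fin k) : Prop :=
  v (fun _ => 0) = 0 ∧ v (fun _ => topF j) = topF k ∧
    ∀ x y : Fin n → Fin j, (∀ i, x i ≤ y i) → v x ≤ v y

/-- The `(j,k)` simple game with point-veto `a`. -/
def uA [NeZero j] [NeZero k] (a : Fin n → Fin j) (x : Fin n → Fin j) : Fin k :=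
  if ∀ i, a i ≤ x i then topF k else 0

/-- The veto game associated with a set `E` of thresholds. -/
def uE [NeZero j] [NeZero k] (E : Set (Fin n → Fin j)) (x : Fin n → Fin j) : Fin k :=
  if ∃ a ∈ E, ∀ i, a i ≤ x i then topF k else 0

/-- Player `i` is a null player of `v`. -/
def NullPlayer [NeZero j] [NeZero k] (v : (Fin n → Fin j) → Fin k) (i : Fin n) : Prop :=
  ∀ (x : Fin n → Fin j) (y : Fin j), v x = v (Function.update x i y)

/-- Players `i` and `h` are equivalent in `v`. -/
def EquivPlayers [NeZero j] [NeZero k] (v : (Fin n → Fin j) → Fin k) (i h : Fin n) : Prop :=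
  ∀ x : Fin n → Fin j, v x = v (x ∘ Equiv.swap i h)

/-- The average game `ṽ(T) = (1/(jⁿ(k-1))) Σ_x [v((j-1)_T, x_{-T}) - v(0_T, x_{-T})]`. -/
def Cfun [NeZero j] [NeZero k] (v : (Fin n → Fin j) → Fin k) (T : Finset (Fin n)) : ℝ :=
  (1 / ((j : ℝ) ^ n * ((k : ℝ) - 1))) *
    ∑ x : Fin n → Fin j,
      (((v (mer T (topF j) x)).val : ℝ) - ((v (mer T 0 x)).val : ℝ))

/-- The Shapley-Shubik index for `(j,k)` simple games. -/
def Phi [NeZero j] [NeZero k] (v : (Fin n → Fin j) → Fin k) (i : Fin n) : ℝ :=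
  ∑ S ∈ univ.filter (fun S : Finset (Fin n) => i ∈ S),
    ((Nat.factorial (S.card - 1) * Nat.factorial (n - S.card) : ℝ) / (Nat.factorial n : ℝ)) *
      (Cfun v S - Cfun v (S.erase i))

/-- The TU game `v_a(S) = (1/(k-1))[v((j-1)_S, a_{-S}) - v(0_S, a_{-S})]`. -/
def vAgame [NeZero j] [NeZero k] (v : (Fin n → Fin j) → Fin k) (a : Fin n → Fin j)
    (S : Finset (Fin n)) : ℝ :=
  (1 / ((k : ℝ) - 1)) * (((v (mer S (topF j) a)).val : ℝ) - ((v (mer S 0 a)).val : ℝ))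

/-- The parametric power index `Φ^a`. -/
def PhiA [NeZero j] [NeZero k] (v : (Fin n → Fin j) → Fin k) (a : Fin n → Fin j) (i : Fin n) : ℝ :=
  ∑ S ∈ univ.filter (fun S : Finset (Fin n) => i ∈ S),
    ((Nat.factorial (S.card - 1) * Nat.factorial (n - S.card) : ℝ) / (Nat.factorial n : ℝ)) *
      (vAgame v a S - vAgame v a (S.erase i))

/-- The game `w^C`: value `k-1` iff all members of `C` give full support. -/
def wCgame [NeZero j] [NeZero k] (C : Finset (Fin n)) : (Fin n → Fin j) → Fin k :=
  uA (fun i => if i ∈ C then topF j else 0)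

/-- The unanimity TU game `γ_S`. -/
def gammaTU (S T : Finset (Fin n)) : ℝ :=
  if S ⊆ T then 1 else 0

end


lemma key_coeff {n : ℕ} [NeZero n] (p : Fin n) :
    ∑ S ∈ univ.filter (fun S : Finset (Fin n) => p ∈ S),
      ((Nat.factorial (S.card - 1) * Nat.factorial (n - S.card) : ℝ) / (Nat.factorial n : ℝ)) = 1 := by
  have hn : 0 < n := Nat.pos_of_ne_zero (NeZero.ne n)
  have hset : (univ.filter (fun S : Finset (Fin n) => p ∈ S))
      = ((univ.erase p).powerset).image (insert p) := by
    ext S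
    simp only [mem_filter, mem_univ, true_and, mem_image, mem_powerset]
    constructor
    · intro hp
      exact ⟨S.erase p, fun x hx => mem_erase.2 ⟨(mem_erase.1 hx).1, mem_univ x⟩,
        Finset.insert_erase hp⟩
    · rintro ⟨T, _, rfl⟩; exact mem_insert_self p T
  rw [hset, Finset.sum_image (by
    intro T hT T' hT' h
    have hpT : p ∉ T := fun hc => (mem_erase.1 ((mem_powerset.1 hT) hc)).1 rfl
    have hpT' : p ∉ T' := fun hc => (mem_erase.1 ((mem_powerset.1 hT') hc)).1 rfl
    rw [← Finset.erase_insert hpT, h, Finset.erase_insert hpT'])]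
  have hstep : ∀ T ∈ (univ.erase p).powerset,
      ((Nat.factorial ((insert p T).card - 1) * Nat.factorial (n - (insert p T).card) : ℝ)
        / (Nat.factorial n : ℝ))
      = (Nat.factorial T.card * Nat.factorial ((n-1) - T.card) : ℝ) / (Nat.factorial n : ℝ) := by
    intro T hT
    have hpT : p ∉ T := fun hc => (mem_erase.1 ((mem_powerset.1 hT) hc)).1 rfl
    rw [Finset.card_insert_of_notMem hpT]
    have h1 : T.card + 1 - 1 = T.card := by omega
    have h2 : n - (T.card + 1) = (n-1) - T.card := by omega
    rw [h1, h2]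
  rw [Finset.sum_congr rfl hstep]
  have hcard : ((univ : Finset (Fin n)).erase p).card = n - 1 := by
    rw [card_erase_of_mem (mem_univ p), card_univ, Fintype.card_fin]
  rw [Finset.sum_powerset, hcard]
  have hinner : ∀ t ∈ Finset.range ((n-1)+1),
      (∑ T ∈ powersetCard t (univ.erase p),
        (Nat.factorial T.card * Nat.factorial ((n-1) - T.card) : ℝ) / (Nat.factorial n : ℝ))
      = (1 : ℝ) / n := by
    intro t ht
    have htn : t ≤ n - 1 := by simpa using Nat.lt_succ_iff.1 (Finset.mem_range.1 ht)
    rw [Finset.sum_powersetCard t (univ.erase p)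
      (fun m => (Nat.factorial m * Nat.factorial ((n-1) - m) : ℝ) / (Nat.factorial n : ℝ))]
    rw [hcard, nsmul_eq_mul]
    have hch : ((n-1).choose t) * Nat.factorial t * Nat.factorial ((n-1) - t)
        = Nat.factorial (n-1) := Nat.choose_mul_factorial_mul_factorial htn
    have hfn : (Nat.factorial n : ℝ) = n * Nat.factorial (n-1) := by
      rw [show n = (n-1)+1 by omega, Nat.factorial_succ]; push_cast
      try rw [show n - 1 + 1 = n by omega]
      ring
    have hne : (Nat.factorial (n-1) : ℝ) ≠ 0 := Nat.cast_ne_zero.2 (Nat.factorial_ne_zero _)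
    have hnn : (n : ℝ) ≠ 0 := Nat.cast_ne_zero.2 (by omega)
    rw [hfn]
    have : ((n-1).choose t : ℝ) * Nat.factorial t * Nat.factorial ((n-1) - t)
        = Nat.factorial (n-1) := by exact_mod_cast congrArg (Nat.cast : ℕ → ℝ) hch
    field_simp
    rw [← this]
  rw [Finset.sum_congr rfl hinner, Finset.sum_const, nsmul_eq_mul]
  have : (n:ℝ) ≠ 0 := Nat.cast_ne_zero.2 (by omega)
  rw [Finset.card_range]
  rw [show (n-1)+1 = n by omega]
  field_simp

noncomputable section
lemma sh_gamma {n : ℕ} [NeZero n] (p i : Fin n) :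
    ∑ S ∈ univ.filter (fun S : Finset (Fin n) => i ∈ S),
      ((Nat.factorial (S.card - 1) * Nat.factorial (n - S.card) : ℝ) / (Nat.factorial n : ℝ)) *
        (gammaTU {p} S - gammaTU {p} (S.erase i)) = if i = p then 1 else 0 := by
  by_cases h : i = p
  · subst h
    rw [if_pos rfl, ← key_coeff i]
    apply Finset.sum_congr rfl
    intro S hS
    rw [mem_filter] at hS
    have h1 : gammaTU {i} S = 1 := if_pos (singleton_subset_iff.2 hS.2)
    have h2 : gammaTU {i} (S.erase i) = 0 := by
      unfold gammaTU
      rw [if_neg]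
      simp
    rw [h1, h2]; ring
  · rw [if_neg h]
    apply Finset.sum_eq_zero
    intro S hS
    have : gammaTU {p} (S.erase i) = gammaTU {p} S := by
      unfold gammaTU
      have : ({p} : Finset (Fin n)) ⊆ S.erase i ↔ ({p} : Finset (Fin n)) ⊆ S := by
        simp only [singleton_subset_iff, mem_erase]
        exact and_iff_right (fun hpi => h hpi.symm)
      simp only [this]
    rw [this]; ring

-- count lemma
lemma count_le {j : ℕ} [NeZero j] (c : Fin j) :
    ∑ y : Fin j, (if c ≤ y then (1:ℝ) else 0) = ((j - c.val : ℕ) : ℝ) := by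
  rw [Finset.sum_boole]
  congr 1
  have : univ.filter (fun y : Fin j => c ≤ y) = Finset.Ici c := by
    ext y; simp
  rw [this, Fin.card_Ici]

lemma vA_eq {n j k : ℕ} [NeZero n] [NeZero j] [NeZero k]
    (hn : 2 ≤ n) (hj : 3 ≤ j) (hk : 2 ≤ k)
    (b : Fin n → Fin j)
    (hb : b = fun i => if i = 0 then (1 : Fin j) else if i = 1 then topF j else 0)
    (a : Fin n → Fin j) (ha : a = fun _ => (⟨j - 2, Nat.sub_lt (by omega) (by omega)⟩ : Fin j))
    (S : Finset (Fin n)) :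
    vAgame (uA b : (Fin n → Fin j) → Fin k) a S = gammaTU {1} S := by
  have h01 : (0 : Fin n) ≠ 1 := by
    have : ((0:Fin n) : ℕ) ≠ ((1:Fin n) : ℕ) := by
      simp [Fin.val_one', Nat.mod_eq_of_lt (show 1 < n by omega)]
    exact fun hc => this (congrArg Fin.val hc)
  have hb1 : b 1 = topF j := by rw [hb]; simp [h01.symm]
  have htopval : (topF j).val = j - 1 := rfl
  have hbot : (uA b (mer S 0 a) : Fin k) = 0 := by
    unfold uA
    rw [if_neg]
    intro hall
    have := hall 1
    rw [hb1] at this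
    rw [Fin.le_def, htopval] at this
    by_cases h1S : (1:Fin n) ∈ S
    · simp only [mer, if_pos h1S, Fin.val_zero] at this
      omega
    · simp only [mer, if_neg h1S, ha] at this
      simp at this
      omega
  by_cases h1S : (1:Fin n) ∈ S
  · have htop : (uA b (mer S (topF j) a) : Fin k) = topF k := by
      unfold uA
      rw [if_pos]
      intro i
      rw [Fin.le_def]
      by_cases hiS : i ∈ S
      · simp only [mer, if_pos hiS, htopval]
        have := (b i).isLt
        omega
      · simp only [mer, if_neg hiS, ha, hb]
        have hi1 : i ≠ 1 := fun hc => hiS (hc ▸ h1S)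
        have hv1 : ((1:Fin j)).val = 1 := by
          rw [Fin.val_one']; exact Nat.mod_eq_of_lt (by omega)
        have hval2 : ((⟨j - 2, by omega⟩ : Fin j)).val = j - 2 := rfl
        by_cases hi0 : i = 0
        · simp only [hi0, eq_self_iff_true, if_true, hval2, hv1]; omega
        · simp only [if_neg hi0, if_neg hi1, hval2, Fin.val_zero]; omega
    have hg : gammaTU {(1:Fin n)} S = 1 := if_pos (singleton_subset_iff.2 h1S)
    rw [vAgame, htop, hbot, hg]
    have hkval : (((topF k).val : ℕ) : ℝ) = (k:ℝ) - 1 := by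
      show (((k-1 : ℕ)) : ℝ) = (k:ℝ) - 1
      push_cast [Nat.cast_sub (show 1 ≤ k by omega)]; ring
    have hkne : (k:ℝ) - 1 ≠ 0 := by
      have : (2:ℝ) ≤ (k:ℝ) := by exact_mod_cast hk
      linarith
    simp only [Fin.val_zero, Nat.cast_zero, sub_zero, hkval]
    field_simp
  · have htop : (uA b (mer S (topF j) a) : Fin k) = 0 := by
      unfold uA
      rw [if_neg]
      intro hall
      have := hall 1
      rw [hb1, Fin.le_def, htopval] at this
      simp only [mer, if_neg h1S, ha] at this
      simp at this
      omega
    rw [vAgame, htop, hbot]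
    have : gammaTU {(1:Fin n)} S = 0 := by
      unfold gammaTU; rw [if_neg (by simpa [singleton_subset_iff] using h1S)]
    rw [this]
    simp
end
noncomputable section
lemma uA_val_prod {n j k : ℕ} [NeZero j] [NeZero k]
    (b : Fin n → Fin j) (y : Fin n → Fin j) :
    (((uA b y : Fin k)).val : ℝ) = ((k - 1 : ℕ) : ℝ) * ∏ i, (if b i ≤ y i then (1:ℝ) else 0) := by
  unfold uA
  by_cases h : ∀ i, b i ≤ y i
  · rw [if_pos h, Finset.prod_eq_one (fun i _ => if_pos (h i))]
    simp [topF]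
  · rw [if_neg h]
    obtain ⟨i, hi⟩ := not_forall.1 h
    have hz : ∏ i, (if b i ≤ y i then (1:ℝ) else 0) = 0 :=
      Finset.prod_eq_zero (mem_univ i) (if_neg hi)
    rw [hz]; simp

lemma prod_two_special {n : ℕ} [NeZero n] (hn : 2 ≤ n) (F : Fin n → ℝ) (c : ℝ)
    (hF : ∀ i : Fin n, i ≠ 0 → i ≠ 1 → F i = c) :
    ∏ i, F i = F 0 * F 1 * c ^ (n - 2) := by
  have h01 : (0:Fin n) ≠ 1 := by
    have : ((0:Fin n) : ℕ) ≠ ((1:Fin n) : ℕ) := by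
      simp [Fin.val_one', Nat.mod_eq_of_lt (show 1 < n by omega)]
    exact fun hc => this (congrArg Fin.val hc)
  have h1m : (1:Fin n) ∈ (univ : Finset (Fin n)).erase 0 :=
    mem_erase.2 ⟨h01.symm, mem_univ 1⟩
  rw [← Finset.mul_prod_erase univ F (mem_univ 0), ← Finset.mul_prod_erase _ F h1m]
  have hrest : ∏ i ∈ ((univ : Finset (Fin n)).erase 0).erase 1, F i = c ^ (n - 2) := by
    rw [Finset.prod_congr rfl (fun i hi => hF i
      (mem_erase.1 (mem_erase.1 hi).2).1 (mem_erase.1 hi).1), Finset.prod_const]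
    congr 1
    rw [card_erase_of_mem h1m, card_erase_of_mem (mem_univ 0), card_univ, Fintype.card_fin]
    omega
  rw [hrest]; ring

lemma Cfun_eq {n j k : ℕ} [NeZero n] [NeZero j] [NeZero k]
    (hn : 2 ≤ n) (hj : 3 ≤ j) (hk : 2 ≤ k)
    (b : Fin n → Fin j)
    (hb : b = fun i => if i = 0 then (1 : Fin j) else if i = 1 then topF j else 0)
    (T : Finset (Fin n)) :
    Cfun (uA b : (Fin n → Fin j) → Fin k) T
      = (1/(j:ℝ)) * gammaTU {0} T + (((j:ℝ)-1)/(j:ℝ)) * gammaTU {1} T := by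
  have h01 : (0:Fin n) ≠ 1 := by
    have : ((0:Fin n) : ℕ) ≠ ((1:Fin n) : ℕ) := by
      simp [Fin.val_one', Nat.mod_eq_of_lt (show 1 < n by omega)]
    exact fun hc => this (congrArg Fin.val hc)
  have hv1j : ((1:Fin j)).val = 1 := by
    rw [Fin.val_one']; exact Nat.mod_eq_of_lt (by omega)
  have hb0 : b 0 = 1 := by rw [hb]; simp
  have hb1 : b 1 = topF j := by rw [hb]; simp [h01.symm]
  have hbo : ∀ i : Fin n, i ≠ 0 → i ≠ 1 → b i = 0 := by
    intro i h0 h1; rw [hb]; simp [h0, h1]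
  have hjR : (j:ℝ) ≠ 0 := Nat.cast_ne_zero.2 (by omega)
  have hkR : (k:ℝ) - 1 ≠ 0 := by
    have : (2:ℝ) ≤ (k:ℝ) := by exact_mod_cast hk
    linarith
  -- top sum
  have hA : ∑ x : Fin n → Fin j, (((uA b (mer T (topF j) x) : Fin k)).val : ℝ)
      = ((k-1:ℕ):ℝ) * ((if (0:Fin n) ∈ T then (j:ℝ) else (j:ℝ)-1) *
          (if (1:Fin n) ∈ T then (j:ℝ) else 1) * (j:ℝ)^(n-2)) := by
    have e1 : ∀ x : Fin n → Fin j, (((uA b (mer T (topF j) x) : Fin k)).val : ℝ)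
        = ((k-1:ℕ):ℝ) * ∏ i, (if b i ≤ (if i ∈ T then topF j else x i) then (1:ℝ) else 0) := by
      intro x; rw [uA_val_prod]; simp only [mer]; congr!
    have hswap : (∑ x : Fin n → Fin j,
          ∏ i, (if b i ≤ (if i ∈ T then topF j else x i) then (1:ℝ) else 0))
        = ∏ i, ∑ y : Fin j, (if b i ≤ (if i ∈ T then topF j else y) then (1:ℝ) else 0) := by
      rw [← Fintype.piFinset_univ]
      exact Finset.sum_prod_piFinset univ
        (fun i y => if b i ≤ (if i ∈ T then topF j else y) then (1:ℝ) else 0)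
    have hin : ∀ i : Fin n, i ∈ T →
        (∑ y : Fin j, (if b i ≤ (if i ∈ T then topF j else y) then (1:ℝ) else 0)) = (j:ℝ) := by
      intro i hiT
      have hle : b i ≤ topF j := by
        rw [Fin.le_def]; have := (b i).isLt; show (b i).val ≤ j - 1; omega
      simp only [if_pos hiT, if_pos hle]
      simp
    have hout : ∀ i : Fin n, i ∉ T →
        (∑ y : Fin j, (if b i ≤ (if i ∈ T then topF j else y) then (1:ℝ) else 0))
          = ((j - (b i).val : ℕ) : ℝ) := by
      intro i hiT
      simp only [if_neg hiT]; exact count_le (b i)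
    rw [Finset.sum_congr rfl (fun x _ => e1 x), ← Finset.mul_sum, hswap]
    rw [prod_two_special hn
      (fun i => ∑ y : Fin j, (if b i ≤ (if i ∈ T then topF j else y) then (1:ℝ) else 0))
      (j:ℝ) (fun i h0 h1 => by
        beta_reduce
        by_cases hiT : i ∈ T
        · exact hin i hiT
        · rw [hout i hiT, hbo i h0 h1]; simp)]
    have hc1 : ((j - ((1:Fin j)).val : ℕ) : ℝ) = (j:ℝ) - 1 := by
      rw [hv1j, Nat.cast_sub (by omega)]; norm_num
    have hctop : ((j - ((topF j)).val : ℕ) : ℝ) = 1 := by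
      show ((j - (j-1) : ℕ) : ℝ) = 1
      rw [show j - (j-1) = 1 by omega]; norm_num
    by_cases h0T : (0:Fin n) ∈ T <;> by_cases h1T : (1:Fin n) ∈ T
    · rw [hin 0 h0T, hin 1 h1T, if_pos h0T, if_pos h1T]
    · rw [hin 0 h0T, hout 1 h1T, hb1, hctop, if_pos h0T, if_neg h1T]
    · rw [hout 0 h0T, hin 1 h1T, hb0, hc1, if_neg h0T, if_pos h1T]
    · rw [hout 0 h0T, hout 1 h1T, hb0, hb1, hc1, hctop, if_neg h0T, if_neg h1T]
  -- bottom sum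
  have hB : ∑ x : Fin n → Fin j, (((uA b (mer T 0 x) : Fin k)).val : ℝ)
      = ((k-1:ℕ):ℝ) * ((if (0:Fin n) ∈ T then 0 else (j:ℝ)-1) *
          (if (1:Fin n) ∈ T then 0 else 1) * (j:ℝ)^(n-2)) := by
    have e1 : ∀ x : Fin n → Fin j, (((uA b (mer T 0 x) : Fin k)).val : ℝ)
        = ((k-1:ℕ):ℝ) * ∏ i, (if b i ≤ (if i ∈ T then (0:Fin j) else x i) then (1:ℝ) else 0) := by
      intro x; rw [uA_val_prod]; simp only [mer]; congr!
    have hswap : (∑ x : Fin n → Fin j,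
          ∏ i, (if b i ≤ (if i ∈ T then (0:Fin j) else x i) then (1:ℝ) else 0))
        = ∏ i, ∑ y : Fin j, (if b i ≤ (if i ∈ T then (0:Fin j) else y) then (1:ℝ) else 0) := by
      rw [← Fintype.piFinset_univ]
      exact Finset.sum_prod_piFinset univ
        (fun i y => if b i ≤ (if i ∈ T then (0:Fin j) else y) then (1:ℝ) else 0)
    have hout : ∀ i : Fin n, i ∉ T →
        (∑ y : Fin j, (if b i ≤ (if i ∈ T then (0:Fin j) else y) then (1:ℝ) else 0))
          = ((j - (b i).val : ℕ) : ℝ) := by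
      intro i hiT
      simp only [if_neg hiT]; exact count_le (b i)
    have hin0 : ∀ i : Fin n, i ∈ T → (b i).val ≠ 0 →
        (∑ y : Fin j, (if b i ≤ (if i ∈ T then (0:Fin j) else y) then (1:ℝ) else 0)) = 0 := by
      intro i hiT hbv
      have hnle : ¬ (b i ≤ (0:Fin j)) := by
        rw [Fin.le_def, Fin.val_zero]; omega
      simp only [if_pos hiT, if_neg hnle]
      simp
    have hinj : ∀ i : Fin n, i ∈ T → b i = 0 →
        (∑ y : Fin j, (if b i ≤ (if i ∈ T then (0:Fin j) else y) then (1:ℝ) else 0)) = (j:ℝ) := by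
      intro i hiT hbv
      simp only [if_pos hiT, hbv, if_pos (le_refl (0:Fin j))]
      simp
    rw [Finset.sum_congr rfl (fun x _ => e1 x), ← Finset.mul_sum, hswap]
    rw [prod_two_special hn
      (fun i => ∑ y : Fin j, (if b i ≤ (if i ∈ T then (0:Fin j) else y) then (1:ℝ) else 0))
      (j:ℝ) (fun i h0 h1 => by
        beta_reduce
        by_cases hiT : i ∈ T
        · exact hinj i hiT (hbo i h0 h1)
        · rw [hout i hiT, hbo i h0 h1]; simp)]
    have hbv0 : ((b 0)).val ≠ 0 := by rw [hb0, hv1j]; omega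
    have hbv1 : ((b 1)).val ≠ 0 := by rw [hb1]; show j - 1 ≠ 0; omega
    have hc1 : ((j - ((1:Fin j)).val : ℕ) : ℝ) = (j:ℝ) - 1 := by
      rw [hv1j, Nat.cast_sub (by omega)]; norm_num
    have hctop : ((j - ((topF j)).val : ℕ) : ℝ) = 1 := by
      show ((j - (j-1) : ℕ) : ℝ) = 1
      rw [show j - (j-1) = 1 by omega]; norm_num
    by_cases h0T : (0:Fin n) ∈ T <;> by_cases h1T : (1:Fin n) ∈ T
    · rw [hin0 0 h0T hbv0, if_pos h0T]; simp
    · rw [hin0 0 h0T hbv0, if_pos h0T]; simp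
    · rw [hout 0 h0T, hin0 1 h1T hbv1, if_neg h0T, if_pos h1T]; simp
    · rw [hout 0 h0T, hout 1 h1T, hb0, hb1, hc1, hctop, if_neg h0T, if_neg h1T]
  have hkc : ((k-1:ℕ):ℝ) = (k:ℝ) - 1 := by
    push_cast [Nat.cast_sub (show 1 ≤ k by omega)]; ring
  have hjn : (j:ℝ)^n = (j:ℝ) * (j:ℝ) * (j:ℝ)^(n-2) := by
    have h2 : (j:ℝ)^n = (j:ℝ)^(n-2+2) := by rw [show n-2+2 = n by omega]
    rw [h2, pow_add]; ring
  have hjp : (j:ℝ)^(n-2) ≠ 0 := pow_ne_zero _ hjR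
  have g0 : gammaTU {(0:Fin n)} T = if (0:Fin n) ∈ T then (1:ℝ) else 0 := by
    unfold gammaTU; simp [singleton_subset_iff]
  have g1 : gammaTU {(1:Fin n)} T = if (1:Fin n) ∈ T then (1:ℝ) else 0 := by
    unfold gammaTU; simp [singleton_subset_iff]
  rw [Cfun, Finset.sum_sub_distrib, hA, hB, hkc, hjn, g0, g1]
  by_cases h0T : (0:Fin n) ∈ T <;> by_cases h1T : (1:Fin n) ∈ T <;>
    simp only [h0T, h1T, if_true, if_false] <;> field_simp <;> ring
end

theorem stmt9 {n j k : ℕ} [NeZero n] [NeZero j] [NeZero k]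
    (hn : 2 ≤ n) (hj : 3 ≤ j) (hk : 2 ≤ k)
    (b : Fin n → Fin j)
    (hb : b = fun i => if i = 0 then (1 : Fin j) else if i = 1 then topF j else 0)
    (a : Fin n → Fin j) (ha : a = fun _ => (⟨j - 2, by omega⟩ : Fin j)) :
    (∀ i : Fin n, PhiA (uA b : (Fin n → Fin j) → Fin k) a i = if i = 1 then 1 else 0) ∧
    (∀ i : Fin n, Phi (uA b : (Fin n → Fin j) → Fin k) i =
        if i = 0 then 1 / (j : ℝ) else if i = 1 then ((j : ℝ) - 1) / j else 0) := by
  have h01 : (0:Fin n) ≠ 1 := by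
    have : ((0:Fin n) : ℕ) ≠ ((1:Fin n) : ℕ) := by
      simp [Fin.val_one', Nat.mod_eq_of_lt (show 1 < n by omega)]
    exact fun hc => this (congrArg Fin.val hc)
  constructor
  · intro i
    rw [← sh_gamma 1 i]
    unfold PhiA
    apply Finset.sum_congr rfl
    intro S _
    rw [vA_eq hn hj hk b hb a ha S, vA_eq hn hj hk b hb a ha (S.erase i)]
  · intro i
    have key : Phi (uA b : (Fin n → Fin j) → Fin k) i
        = (1/(j:ℝ)) * (if i = 0 then 1 else 0)
          + (((j:ℝ)-1)/(j:ℝ)) * (if i = 1 then 1 else 0) := by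
      unfold Phi
      have hterm : ∀ S ∈ univ.filter (fun S : Finset (Fin n) => i ∈ S),
          ((Nat.factorial (S.card - 1) * Nat.factorial (n - S.card) : ℝ) / (Nat.factorial n : ℝ)) *
            (Cfun (uA b : (Fin n → Fin j) → Fin k) S
              - Cfun (uA b : (Fin n → Fin j) → Fin k) (S.erase i))
          = (1/(j:ℝ)) *
              (((Nat.factorial (S.card - 1) * Nat.factorial (n - S.card) : ℝ) /
                (Nat.factorial n : ℝ)) * (gammaTU {0} S - gammaTU {0} (S.erase i)))
            + (((j:ℝ)-1)/(j:ℝ)) *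
              (((Nat.factorial (S.card - 1) * Nat.factorial (n - S.card) : ℝ) /
                (Nat.factorial n : ℝ)) * (gammaTU {1} S - gammaTU {1} (S.erase i))) := by
        intro S _
        rw [Cfun_eq hn hj hk b hb S, Cfun_eq hn hj hk b hb (S.erase i)]
        ring
      rw [Finset.sum_congr rfl hterm, Finset.sum_add_distrib, ← Finset.mul_sum, ← Finset.mul_sum,
        sh_gamma 0 i, sh_gamma 1 i]
    rw [key]
    by_cases hi0 : i = 0
    · simp [hi0, h01]
    · by_cases hi1 : i = 1 <;> simp [hi0, hi1, show n ≠ 1 by omega]
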